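/- Fix an integer n ≥ 3 and r₀ > 0. Let b : (0,∞) → ℝ be differentiable with b′(r) = −(1 + (r/r₀)^{2n−3})^{−1/2} for all r > 0. Then the rotationally symmetric function x ↦ b(|x|) on ℝⁿ∖{0} satisfies (δ^{ij} + b_i b_j/(1 − |∇b|²)) b_{ij} = b′(|x|)/(2|x|) < 0; in particular, b(|x|) is a strict static supersolution of the Euclidean graphical mean curvature flow. -/

import Mathlib

/- STATEMENT 2: For n ≥ 3 and r₀ > 0, the rotationally symmetric profile b with
b′(r) = −(1 + (r/r₀)^{2n−3})^{−1/2} satisfies, in the radial form of the Euclidean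
graphical mean curvature operator,
b″/(1 − (b′)²) + (n−1)b′/r = b′(r)/(2r) < 0, i.e. b is a strict static supersolution. -/
theorem stmt_2 (n : ℕ) (hn : 3 ≤ n) (r₀ : ℝ) (hr₀ : 0 < r₀) (b : ℝ → ℝ)
    (hb : ∀ r : ℝ, 0 < r →
      HasDerivAt b (-(Real.sqrt (1 + (r / r₀) ^ (2 * n - 3)))⁻¹) r) :
    ∀ r : ℝ, 0 < r →
      ∃ d : ℝ, HasDerivAt (deriv b) d r ∧
        d / (1 - deriv b r ^ 2) + ((n : ℝ) - 1) * deriv b r / r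
          = deriv b r / (2 * r) ∧
        deriv b r / (2 * r) < 0 := by
  intro r hr
  set m : ℕ := 2 * n - 3 with hm
  have hm1 : 1 ≤ m := by omega
  have ht : 0 < r / r₀ := div_pos hr hr₀
  set t : ℝ := r / r₀ with htdef
  have hu : (0:ℝ) < 1 + t ^ m := by positivity
  set s : ℝ := Real.sqrt (1 + t ^ m) with hsdef
  have hs : 0 < s := Real.sqrt_pos.mpr hu
  have hs2 : s ^ 2 = 1 + t ^ m := Real.sq_sqrt hu.le
  have h1 : HasDerivAt (fun x : ℝ => x / r₀) (1 / r₀) r := by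
    simpa using (hasDerivAt_id r).div_const r₀
  have h2 : HasDerivAt (fun x : ℝ => (x / r₀) ^ m) ((m : ℝ) * t ^ (m - 1) * (1 / r₀)) r := by
    simpa using h1.fun_pow m
  have h3 : HasDerivAt (fun x : ℝ => 1 + (x / r₀) ^ m) ((m : ℝ) * t ^ (m - 1) * (1 / r₀)) r :=
    h2.const_add 1
  have h4 : HasDerivAt (fun x : ℝ => Real.sqrt (1 + (x / r₀) ^ m))
      ((m : ℝ) * t ^ (m - 1) * (1 / r₀) / (2 * s)) r := h3.sqrt hu.ne'
  have h5 := (h4.inv hs.ne').neg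
  set D : ℝ := -(-((m : ℝ) * t ^ (m - 1) * (1 / r₀) / (2 * s)) / s ^ 2) with hD
  have heq : deriv b =ᶠ[nhds r] fun x => -(Real.sqrt (1 + (x / r₀) ^ m))⁻¹ := by
    filter_upwards [isOpen_Ioi.mem_nhds (show r ∈ Set.Ioi 0 from hr)] with x hx
    exact (hb x hx).deriv
  have hder : HasDerivAt (deriv b) D r := h5.congr_of_eventuallyEq heq
  have hbr : deriv b r = -s⁻¹ := (hb r hr).deriv
  have hm' : (m : ℝ) = 2 * (n : ℝ) - 3 := by
    have : (m : ℝ) = ((2 * n - 3 : ℕ) : ℝ) := by rw [hm]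
    rw [this]; push_cast [Nat.cast_sub (by omega : 3 ≤ 2 * n)]; ring
  have htm : t ^ (m - 1) * t = t ^ m := by
    rw [← pow_succ]; congr 1; omega
  have hrt : r = t * r₀ := by rw [htdef]; exact (div_mul_cancel₀ r hr₀.ne').symm
  have hne : 1 - (deriv b r) ^ 2 ≠ 0 := by
    rw [hbr]
    have : (-s⁻¹) ^ 2 = (1 + t ^ m)⁻¹ := by
      rw [neg_sq, ← hs2]; field_simp
    rw [this]
    have h1' : (1 + t ^ m)⁻¹ < 1 := by
      rw [inv_lt_one_iff₀]; right; nlinarith [pow_pos ht m]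
    linarith
  refine ⟨D, hder, ?_, ?_⟩
  · have ha : t ^ (m - 1) ≠ 0 := (pow_pos ht _).ne'
    have hden : 1 - (deriv b r) ^ 2 = t ^ (m - 1) * t / s ^ 2 := by
      rw [hbr, neg_sq, htm, hs2]
      field_simp
      linear_combination hs2
    have key1 : D / (1 - (deriv b r) ^ 2) = (m : ℝ) / (2 * s * r) := by
      rw [hden, hD, hrt]
      field_simp
    rw [key1, hbr, hm']
    field_simp
    ring
  · rw [hbr]
    apply div_neg_of_neg_of_pos
    · simp [hs]
    · linarith
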